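/- arXiv:2212.10721 — 2 statements merged into one kernel-verified Lean document; each statement's English description precedes it below -/
import Mathlib

section
/- Let q ≥ 2, n ≥ 2, a ∈ ℤ_n, b ∈ ℤ_q, and let T_{a,b}(n;q) = {x ∈ ℤ_q^n : Syn(α(x)) ≡ a (mod n) and Σ_{i=1}^n x_i ≡ b (mod q)}, where α(x) is the signature of x. Then T_{a,b}(n;q) corrects a single deletion: for any two distinct codewords x, x̃ ∈ T_{a,b}(n;q), no sequence z ∈ ℤ_q^{n-1} can be obtained both from x by deleting one coordinate and from x̃ by deleting one coordinate. -/
/-- VT syndrome of a sequence (1-indexed): `Syn(x) = ∑ i * x_i`. -/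
def synL (l : List ℕ) : ℕ := ∑ i ∈ Finset.range l.length, (i + 1) * l.getD i 0

/-- Signature of a `q`-ary sequence: binary vector of length `n-1` with
`α(x)_i = 1` iff `x_{i+1} ≥ x_i`. -/
def sigL (x : List ℕ) : List ℕ :=
  List.ofFn fun i : Fin (x.length - 1) =>
    if x.getD i.1 0 ≤ x.getD (i.1 + 1) 0 then 1 else 0

lemma getD_eraseIdx (l : List ℕ) (i k : ℕ) (hi : i < l.length) :
    (l.eraseIdx i).getD k 0 = if k < i then l.getD k 0 else l.getD (k + 1) 0 := by
  have hlen : (l.eraseIdx i).length = l.length - 1 := by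
    rw [List.length_eraseIdx]; simp [hi]
  by_cases hk : k < l.length - 1
  · rw [List.getD_eq_getElem _ 0 (by omega), List.getElem_eraseIdx]
    split_ifs <;> first | omega | exact (List.getD_eq_getElem _ 0 (by omega)).symm
  · rw [List.getD_eq_default _ 0 (by omega)]
    split_ifs with h1
    · omega
    · rw [List.getD_eq_default _ 0 (by omega)]

lemma length_sigL (x : List ℕ) : (sigL x).length = x.length - 1 := by
  simp [sigL]

lemma getD_sigL (x : List ℕ) (k : ℕ) (hk : k < x.length - 1) :
    (sigL x).getD k 0 = if x.getD k 0 ≤ x.getD (k + 1) 0 then 1 else 0 := by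
  rw [List.getD_eq_getElem _ 0 (by rw [length_sigL]; omega)]
  simp only [sigL, List.getElem_ofFn]

lemma sigL_binary (x : List ℕ) (k : ℕ) : (sigL x).getD k 0 ≤ 1 := by
  by_cases hk : k < (sigL x).length
  · rw [length_sigL] at hk
    rw [getD_sigL x k hk]; split_ifs <;> omega
  · rw [List.getD_eq_default _ 0 (by omega)]; omega

lemma sum_eraseIdx (l : List ℕ) (i : ℕ) (hi : i < l.length) :
    l.sum = (l.eraseIdx i).sum + l.getD i 0 := by
  have hl : l = List.take i l ++ l[i] :: List.drop (i + 1) l := by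
    rw [← List.drop_eq_getElem_cons hi, List.take_append_drop]
  conv_lhs => rw [hl]
  rw [List.eraseIdx_eq_take_drop_succ, List.getD_eq_getElem _ 0 hi,
    List.sum_append, List.sum_append, List.sum_cons]
  ring

lemma synL_eraseIdx (l : List ℕ) (i : ℕ) (hi : i < l.length) :
    synL l = synL (l.eraseIdx i) + (i + 1) * l.getD i 0
      + ∑ k ∈ Finset.Ico (i + 1) l.length, l.getD k 0 := by
  have hlen : (l.eraseIdx i).length = l.length - 1 := by
    rw [List.length_eraseIdx]; simp [hi]
  have hm1 : l.length - 1 + 1 = l.length := by omega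
  unfold synL
  rw [hlen, Finset.range_eq_Ico, Finset.range_eq_Ico,
    ← Finset.sum_Ico_consecutive _ (Nat.zero_le i) (by omega : i ≤ l.length - 1),
    ← Finset.sum_Ico_consecutive _ (Nat.zero_le i) (le_of_lt hi)]
  have h1 : ∑ k ∈ Finset.Ico 0 i, (k + 1) * (l.eraseIdx i).getD k 0
      = ∑ k ∈ Finset.Ico 0 i, (k + 1) * l.getD k 0 := by
    apply Finset.sum_congr rfl
    intro k hk
    simp only [Finset.mem_Ico] at hk
    rw [getD_eraseIdx l i k hi, if_pos hk.2]
  have h2 : ∑ k ∈ Finset.Ico i (l.length - 1), (k + 1) * (l.eraseIdx i).getD k 0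
      = ∑ k ∈ Finset.Ico (i + 1) l.length, k * l.getD k 0 := by
    rw [Finset.sum_Ico_eq_sum_range, Finset.sum_Ico_eq_sum_range]
    apply Finset.sum_congr (by congr 1; omega)
    · intro k hk
      simp only [Finset.mem_range] at hk
      rw [getD_eraseIdx l i (i + k) hi, if_neg (by omega)]
      ring_nf
  have h3 : ∑ k ∈ Finset.Ico i l.length, (k + 1) * l.getD k 0
      = (i + 1) * l.getD i 0 + (∑ k ∈ Finset.Ico (i + 1) l.length, k * l.getD k 0
        + ∑ k ∈ Finset.Ico (i + 1) l.length, l.getD k 0) := by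
    rw [Finset.sum_eq_sum_Ico_succ_bot hi, ← Finset.sum_add_distrib]
    congr 1
    apply Finset.sum_congr rfl
    intro k _; ring
  rw [h1, h2, h3]; ring

lemma list_eq_of_getD (l l' : List ℕ) (h : l.length = l'.length)
    (he : ∀ k, l.getD k 0 = l'.getD k 0) : l = l' :=
  List.ext_getElem h fun k h1 h2 => by
    have := he k
    rwa [List.getD_eq_getElem _ 0 h1, List.getD_eq_getElem _ 0 h2] at this

lemma tail_sum_eraseIdx (y : List ℕ) (i : ℕ) (hi : i < y.length) :
    ∑ k ∈ Finset.Ico (i + 1) y.length, y.getD k 0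
      = ∑ k ∈ Finset.Ico i (y.length - 1), (y.eraseIdx i).getD k 0 := by
  rw [Finset.sum_Ico_eq_sum_range, Finset.sum_Ico_eq_sum_range]
  apply Finset.sum_congr (by congr 1; omega)
  intro k _
  rw [getD_eraseIdx y i (i + k) hi, if_neg (by omega)]
  congr 1; omega

lemma vt_binary_aux (m : ℕ) (y y' : List ℕ) (hy : y.length = m) (hy' : y'.length = m)
    (hbin : ∀ k, y.getD k 0 ≤ 1) (hbin' : ∀ k, y'.getD k 0 ≤ 1)
    (hsyn : synL y % (m + 1) = synL y' % (m + 1))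
    (i i' : ℕ) (hi : i < m) (hi' : i' < m) (hii : i ≤ i')
    (hz : y.eraseIdx i = y'.eraseIdx i') : y = y' := by
  set z := y.eraseIdx i with hzdef
  set u := y.getD i 0 with hu
  set v := y'.getD i' 0 with hv
  have hzlen : z.length = m - 1 := by
    rw [hzdef, List.length_eraseIdx]; simp [hy, hi]
  have hzbin : ∀ k, z.getD k 0 ≤ 1 := by
    intro k
    rw [hzdef, getD_eraseIdx y i k (by omega)]
    split_ifs <;> apply hbin
  -- syndrome decompositions
  have e1 : synL y = synL z + (i + 1) * u
      + ∑ k ∈ Finset.Ico i (m - 1), z.getD k 0 := by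
    have := synL_eraseIdx y i (by omega)
    rw [tail_sum_eraseIdx y i (by omega)] at this
    rw [this, hy]
  have e2 : synL y' = synL z + (i' + 1) * v
      + ∑ k ∈ Finset.Ico i' (m - 1), z.getD k 0 := by
    have := synL_eraseIdx y' i' (by omega)
    rw [tail_sum_eraseIdx y' i' (by omega)] at this
    rw [this, hy', hz]
  have hsplit : ∑ k ∈ Finset.Ico i (m - 1), z.getD k 0
      = ∑ k ∈ Finset.Ico i i', z.getD k 0 + ∑ k ∈ Finset.Ico i' (m - 1), z.getD k 0 := by
    rw [Finset.sum_Ico_consecutive _ hii (by omega)]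
  set S := ∑ k ∈ Finset.Ico i i', z.getD k 0 with hS
  have hSle : S ≤ i' - i := by
    have := Finset.sum_le_card_nsmul (Finset.Ico i i') (fun k => z.getD k 0) 1
      (fun k _ => hzbin k)
    rwa [Nat.card_Ico, smul_eq_mul, mul_one] at this
  -- divisibility
  have hdvd : ((m : ℤ) + 1) ∣ ((i : ℤ) + 1) * u - ((i' : ℤ) + 1) * v + S := by
    have hmod : synL y' ≡ synL y [MOD m + 1] := (Nat.ModEq.symm hsyn)
    have hd := Nat.modEq_iff_dvd.mp hmod
    have harith : (synL y : ℤ) - synL y'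
        = ((i : ℤ) + 1) * u - ((i' : ℤ) + 1) * v + S := by
      have e1' := e1; have e2' := e2
      rw [hsplit] at e1'
      have : (synL y : ℤ) = synL z + ((i : ℤ) + 1) * u + S
          + ∑ k ∈ Finset.Ico i' (m - 1), (z.getD k 0 : ℤ) := by
        rw [e1']; push_cast; ring
      have h2 : (synL y' : ℤ) = synL z + ((i' : ℤ) + 1) * v
          + ∑ k ∈ Finset.Ico i' (m - 1), (z.getD k 0 : ℤ) := by
        rw [e2']; push_cast; ring
      rw [this, h2]; ring
    rw [← harith]
    simpa using hd
  have hu1 : u ≤ 1 := hbin i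
  have hv1 : v ≤ 1 := hbin' i'
  have habs : |((i : ℤ) + 1) * u - ((i' : ℤ) + 1) * v + S| < (m : ℤ) + 1 := by
    rw [abs_lt]
    constructor
    · have : (0:ℤ) ≤ ((i : ℤ) + 1) * u + S := by positivity
      have hvb : ((i' : ℤ) + 1) * v ≤ (i' : ℤ) + 1 := by
        have : (v:ℤ) ≤ 1 := by exact_mod_cast hv1
        nlinarith
      omega
    · have hub : ((i : ℤ) + 1) * u ≤ (i : ℤ) + 1 := by
        have : (u:ℤ) ≤ 1 := by exact_mod_cast hu1
        nlinarith
      have hSb : (S : ℤ) ≤ (i' : ℤ) - i := by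
        have : (S:ℤ) ≤ ((i' - i : ℕ) : ℤ) := by exact_mod_cast hSle
        omega
      have : (0:ℤ) ≤ ((i' : ℤ) + 1) * v := by positivity
      omega
  have hzero : ((i : ℤ) + 1) * u - ((i' : ℤ) + 1) * v + S = 0 :=
    Int.eq_zero_of_abs_lt_dvd hdvd habs
  obtain ⟨huv, hall⟩ : u = v ∧ (∀ k ∈ Finset.Ico i i', z.getD k 0 = u) := by
    rcases Nat.le_one_iff_eq_zero_or_eq_one.mp hu1 with h0u | h1u <;>
      rcases Nat.le_one_iff_eq_zero_or_eq_one.mp hv1 with h0v | h1v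
    · -- u = 0, v = 0
      refine ⟨by rw [h0u, h0v], ?_⟩
      have hS0 : S = 0 := by
        rw [h0u, h0v] at hzero
        push_cast at hzero
        omega
      intro k hk
      rw [h0u]
      exact (Finset.sum_eq_zero_iff.mp hS0) k hk
    · -- u = 0, v = 1 : contradiction
      exfalso
      rw [h0u, h1v] at hzero
      push_cast at hzero
      omega
    · -- u = 1, v = 0 : contradiction
      exfalso
      rw [h1u, h0v] at hzero
      push_cast at hzero
      omega
    · -- u = 1, v = 1
      refine ⟨by rw [h1u, h1v], ?_⟩
      have hSeq : S = i' - i := by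
        rw [h1u, h1v] at hzero
        push_cast at hzero
        omega
      intro k hk
      by_contra hne2
      have h0 : z.getD k 0 = 0 := by have := hzbin k; rw [h1u] at hne2; omega
      have hkmem := hk
      simp only [Finset.mem_Ico] at hkmem
      have hrest := Finset.sum_le_card_nsmul ((Finset.Ico i i').erase k)
        (fun j => z.getD j 0) 1 (fun j _ => hzbin j)
      rw [Finset.card_erase_of_mem hk, Nat.card_Ico, smul_eq_mul, mul_one] at hrest
      have hsplit2 : z.getD k 0 + ∑ j ∈ (Finset.Ico i i').erase k, z.getD j 0
          = ∑ j ∈ Finset.Ico i i', z.getD j 0 :=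
        Finset.add_sum_erase _ (fun j => z.getD j 0) hk
      rw [← hS] at hsplit2
      omega
  -- conclude equality
  apply list_eq_of_getD y y' (by omega)
  intro k
  have hyk : ∀ j, i < j → y.getD j 0 = z.getD (j - 1) 0 := by
    intro j hj
    rw [hzdef, getD_eraseIdx y i (j-1) (by omega), if_neg (by omega)]
    congr 1; omega
  have hyk' : ∀ j, i' < j → y'.getD j 0 = z.getD (j - 1) 0 := by
    intro j hj
    rw [hz, getD_eraseIdx y' i' (j-1) (by omega), if_neg (by omega)]
    congr 1; omega
  have hylo : ∀ j, j < i → y.getD j 0 = z.getD j 0 := by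
    intro j hj
    rw [hzdef, getD_eraseIdx y i j (by omega), if_pos hj]
  have hylo' : ∀ j, j < i' → y'.getD j 0 = z.getD j 0 := by
    intro j hj
    rw [hz, getD_eraseIdx y' i' j (by omega), if_pos hj]
  rcases lt_trichotomy k i with hk | hk | hk
  · rw [hylo k hk, hylo' k (by omega)]
  · subst hk
    rcases eq_or_lt_of_le hii with he | hlt
    · calc y.getD k 0 = u := hu.symm
        _ = v := huv
        _ = y'.getD k 0 := by rw [hv, he]
    · rw [← hu, hylo' k hlt, hall k (Finset.mem_Ico.mpr ⟨le_refl k, hlt⟩)]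
  · rcases lt_trichotomy k i' with hk2 | hk2 | hk2
    · rw [hyk k hk, hylo' k hk2, hall (k-1) (Finset.mem_Ico.mpr ⟨by omega, by omega⟩),
        hall k (Finset.mem_Ico.mpr ⟨by omega, hk2⟩)]
    · subst hk2
      rw [hyk k hk, ← hv, ← huv, hall (k-1) (Finset.mem_Ico.mpr ⟨by omega, by omega⟩)]
    · rw [hyk k hk, hyk' k hk2]

lemma getD_sigL' (x : List ℕ) (k : ℕ) :
    (sigL x).getD k 0
      = if k + 1 < x.length then (if x.getD k 0 ≤ x.getD (k + 1) 0 then 1 else 0) else 0 := by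
  by_cases hk : k + 1 < x.length
  · rw [if_pos hk, getD_sigL x k (by omega)]
  · rw [if_neg hk, List.getD_eq_default _ 0 (by rw [length_sigL]; omega)]

lemma sigL_eraseIdx (x : List ℕ) (i : ℕ) (hi : i < x.length) (hn2 : 2 ≤ x.length) :
    ∃ j < x.length - 1, sigL (x.eraseIdx i) = (sigL x).eraseIdx j := by
  set n := x.length with hn
  set z := x.eraseIdx i with hz
  have hzlen : z.length = n - 1 := by
    rw [hz, List.length_eraseIdx, if_pos hi]
  have hzk : ∀ k, z.getD k 0 = if k < i then x.getD k 0 else x.getD (k + 1) 0 :=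
    fun k => getD_eraseIdx x i k hi
  have hsiglen : (sigL x).length = n - 1 := length_sigL x
  have main : ∀ j, j < n - 1 →
      (∀ k, k + 2 < n →
        (if k + 1 < n - 1 then (if z.getD k 0 ≤ z.getD (k + 1) 0 then (1:ℕ) else 0) else 0)
          = (if k < j then (sigL x).getD k 0 else (sigL x).getD (k + 1) 0)) →
      sigL z = (sigL x).eraseIdx j := by
    intro j hj hpt
    apply list_eq_of_getD
    · rw [length_sigL, hzlen, List.length_eraseIdx, if_pos (by omega), hsiglen]
    · intro k
      rw [getD_sigL' z k, hzlen, getD_eraseIdx (sigL x) j k (by omega)]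
      by_cases hk : k + 2 < n
      · exact hpt k hk
      · rw [if_neg (show ¬ k + 1 < n - 1 by omega), if_neg (show ¬ k < j by omega),
          List.getD_eq_default _ 0 (by omega)]
  rcases Nat.eq_zero_or_pos i with hi0 | hipos
  · -- i = 0 : j = 0
    subst hi0
    refine ⟨0, by omega, main 0 (by omega) ?_⟩
    intro k hk
    have hz1 : z.getD k 0 = x.getD (k + 1) 0 := by rw [hzk k, if_neg (by omega)]
    have hz2 : z.getD (k + 1) 0 = x.getD (k + 1 + 1) 0 := by rw [hzk (k+1), if_neg (by omega)]
    rw [if_pos (show k + 1 < n - 1 by omega), hz1, hz2, if_neg (show ¬ k < 0 by omega),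
      getD_sigL' x (k + 1), if_pos (show k + 1 + 1 < n by omega)]
  · rcases Nat.lt_or_ge (i + 1) n with hilt | hitop
    · -- 1 ≤ i ≤ n - 2
      by_cases hiff : (x.getD (i-1) 0 ≤ x.getD (i+1) 0) ↔ (x.getD (i-1) 0 ≤ x.getD i 0)
      · -- merged bit equals old bit at position i-1 : delete index i
        refine ⟨i, by omega, main i (by omega) ?_⟩
        intro k hk
        rcases lt_trichotomy (k + 1) i with h | h | h
        · have hz1 : z.getD k 0 = x.getD k 0 := by rw [hzk k, if_pos (by omega)]
          have hz2 : z.getD (k + 1) 0 = x.getD (k + 1) 0 := by rw [hzk (k+1), if_pos h]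
          rw [if_pos (show k + 1 < n - 1 by omega), hz1, hz2, if_pos (show k < i by omega),
            getD_sigL' x k, if_pos (show k + 1 < n by omega)]
        · -- k = i - 1 : merged bit position
          have hksub : k = i - 1 := by omega
          subst hksub
          have e : i - 1 + 1 = i := by omega
          have hz1 : z.getD (i - 1) 0 = x.getD (i - 1) 0 := by
            rw [hzk (i-1), if_pos (by omega)]
          have hz2 : z.getD (i - 1 + 1) 0 = x.getD (i + 1) 0 := by
            rw [e, hzk i, if_neg (by omega)]
          rw [if_pos (show i - 1 + 1 < n - 1 by omega), hz1, hz2,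
            if_pos (show i - 1 < i by omega), getD_sigL' x (i - 1), e,
            if_pos (show i < n by omega)]
          split_ifs with a1 a2 a2 <;> first | rfl | (exfalso; omega)
        · have hz1 : z.getD k 0 = x.getD (k + 1) 0 := by rw [hzk k, if_neg (by omega)]
          have hz2 : z.getD (k + 1) 0 = x.getD (k + 1 + 1) 0 := by
            rw [hzk (k+1), if_neg (by omega)]
          rw [if_pos (show k + 1 < n - 1 by omega), hz1, hz2, if_neg (show ¬ k < i by omega),
            getD_sigL' x (k + 1), if_pos (show k + 1 + 1 < n by omega)]
      · -- merged bit equals old bit at position i : delete index i - 1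
        refine ⟨i - 1, by omega, main (i - 1) (by omega) ?_⟩
        intro k hk
        rcases lt_trichotomy (k + 1) i with h | h | h
        · have hz1 : z.getD k 0 = x.getD k 0 := by rw [hzk k, if_pos (by omega)]
          have hz2 : z.getD (k + 1) 0 = x.getD (k + 1) 0 := by rw [hzk (k+1), if_pos h]
          rw [if_pos (show k + 1 < n - 1 by omega), hz1, hz2, if_pos (show k < i - 1 by omega),
            getD_sigL' x k, if_pos (show k + 1 < n by omega)]
        · have hksub : k = i - 1 := by omega
          subst hksub
          have e : i - 1 + 1 = i := by omega
          have hz1 : z.getD (i - 1) 0 = x.getD (i - 1) 0 := by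
            rw [hzk (i-1), if_pos (by omega)]
          have hz2 : z.getD (i - 1 + 1) 0 = x.getD (i + 1) 0 := by
            rw [e, hzk i, if_neg (by omega)]
          rw [if_pos (show i - 1 + 1 < n - 1 by omega), hz1, hz2,
            if_neg (show ¬ i - 1 < i - 1 by omega), e, getD_sigL' x i,
            if_pos (show i + 1 < n by omega)]
          split_ifs with a1 a2 a2 <;> first | rfl | (exfalso; exact hiff (by constructor <;> intro <;> omega))
        · have hz1 : z.getD k 0 = x.getD (k + 1) 0 := by rw [hzk k, if_neg (by omega)]
          have hz2 : z.getD (k + 1) 0 = x.getD (k + 1 + 1) 0 := by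
            rw [hzk (k+1), if_neg (by omega)]
          rw [if_pos (show k + 1 < n - 1 by omega), hz1, hz2,
            if_neg (show ¬ k < i - 1 by omega), getD_sigL' x (k + 1),
            if_pos (show k + 1 + 1 < n by omega)]
    · -- i = n - 1 : j = n - 2
      refine ⟨n - 2, by omega, main (n - 2) (by omega) ?_⟩
      intro k hk
      have hz1 : z.getD k 0 = x.getD k 0 := by rw [hzk k, if_pos (by omega)]
      have hz2 : z.getD (k + 1) 0 = x.getD (k + 1) 0 := by rw [hzk (k+1), if_pos (by omega)]
      rw [if_pos (show k + 1 < n - 1 by omega), hz1, hz2, if_pos (show k < n - 2 by omega),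
        getD_sigL' x k, if_pos (show k + 1 < n by omega)]

lemma myIteIff (P Q : Prop) [Decidable P] [Decidable Q]
    (h : (if P then (1:ℕ) else 0) = (if Q then 1 else 0)) : P ↔ Q := by
  by_cases hp : P <;> by_cases hq : Q <;> simp [hp, hq] at h ⊢ <;> tauto

lemma chain_gen (r : ℕ → ℕ → Prop) (htrans : ∀ p q s, r p q → r q s → r p s)
    (f : ℕ → ℕ) (a : ℕ) : ∀ b, (∀ k, a ≤ k → k < b → r (f k) (f (k + 1))) → a < b →
    r (f a) (f b) := by
  intro b
  induction b with
  | zero => intro _ h; exact absurd h (Nat.not_lt_zero a)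
  | succ m ih =>
    intro hstep hab
    rcases Nat.lt_or_ge a m with h | h
    · exact htrans _ _ _ (ih (fun k h1 h2 => hstep k h1 (by omega)) h)
        (hstep m (by omega) (by omega))
    · have : a = m := by omega
      subst this
      exact hstep a le_rfl (by omega)

lemma sig_eq_aux (n : ℕ) (x x' : List ℕ) (hx : x.length = n) (hx' : x'.length = n)
    (hsig : sigL x = sigL x') (i i' : ℕ) (hi : i < n) (hi' : i' < n) (hii : i ≤ i')
    (hval : x.getD i 0 = x'.getD i' 0)
    (hz : x.eraseIdx i = x'.eraseIdx i') : x = x' := by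
  set f := fun k => x.getD k 0 with hf
  set g := fun k => x'.getD k 0 with hg
  have hzk : ∀ k, (x.eraseIdx i).getD k 0 = if k < i then f k else f (k + 1) :=
    fun k => getD_eraseIdx x i k (by omega)
  have hzk' : ∀ k, (x.eraseIdx i).getD k 0 = if k < i' then g k else g (k + 1) := by
    intro k; rw [hz]; exact getD_eraseIdx x' i' k (by omega)
  have hlo : ∀ k, k < i → g k = f k := by
    intro k hk
    have h1 := hzk k; have h2 := hzk' k
    rw [if_pos hk] at h1; rw [if_pos (by omega)] at h2; omega
  have hmid : ∀ k, i ≤ k → k < i' → g k = f (k + 1) := by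
    intro k hk1 hk2
    have h1 := hzk k; have h2 := hzk' k
    rw [if_neg (by omega)] at h1; rw [if_pos hk2] at h2; omega
  have hhi : ∀ k, i' < k → g k = f k := by
    intro k hk
    have h1 := hzk (k - 1); have h2 := hzk' (k - 1)
    rw [if_neg (by omega)] at h1; rw [if_neg (by omega)] at h2
    have e : k - 1 + 1 = k := by omega
    rw [e] at h1 h2; omega
  have hsigk : ∀ k, k + 1 < n → (f k ≤ f (k + 1) ↔ g k ≤ g (k + 1)) := by
    intro k hk
    have h1 := congrArg (fun l => l.getD k 0) hsig
    rw [getD_sigL x k (by omega), getD_sigL x' k (by omega)] at h1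
    exact myIteIff _ _ h1
  -- show all entries equal
  have hent : ∀ k, g k = f k := by
    rcases eq_or_lt_of_le hii with he | hlt
    · -- i = i'
      subst he
      intro k
      rcases lt_trichotomy k i with hk | hk | hk
      · exact hlo k hk
      · subst hk; exact hval.symm
      · exact hhi k hk
    · -- i < i'
      have hbound : (f (i' - 1) ≤ f i') ↔ (f i' ≤ f i) := by
        have h := hsigk (i' - 1) (by omega)
        have e : i' - 1 + 1 = i' := by omega
        rw [e] at h
        have hval' : g i' = f i := hval.symm
        rw [hmid (i' - 1) (by omega) (by omega), e, hval'] at h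
        exact h
      have hstep : ∀ k, i ≤ k → k + 1 < i' → (f k ≤ f (k + 1) ↔ f (k + 1) ≤ f (k + 1 + 1)) := by
        intro k hk1 hk2
        have h := hsigk k (by omega)
        rw [hmid k hk1 (by omega), hmid (k + 1) (by omega) hk2] at h
        exact h
      have hconst : ∀ k, i ≤ k → k ≤ i' → f k = f i := by
        by_cases hc : f i ≤ f (i + 1)
        · -- nondecreasing run
          have hup : ∀ k, i ≤ k → k < i' → f k ≤ f (k + 1) := by
            intro k hk1 hk2
            rcases eq_or_lt_of_le hk1 with he2 | hlt2
            · rw [← he2]; exact hc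
            · have : f i ≤ f (i + 1) ↔ f k ≤ f (k + 1) := by
                rcases Nat.lt_or_ge (i + 1) k with hh | hh
                · have := chain_gen (fun p q => p = q) (fun _ _ _ a b => a.trans b)
                    (fun j => if f j ≤ f (j + 1) then 1 else 0) i k ?_ hlt2
                  · exact myIteIff _ _ this
                  · intro j hj1 hj2
                    have := hstep j hj1 (by omega)
                    split_ifs with b1 b2 b2 <;> first | rfl | (exfalso; omega)
                · have : k = i + 1 := by omega
                  subst this
                  exact hstep i le_rfl (by omega)
              exact this.mp hc
          have hij : f i ≤ f i' :=
            chain_gen (· ≤ ·) (fun _ _ _ a b => a.trans b) f i i' hup hlt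
          have hji : f i' ≤ f i := hbound.mp (hup (i' - 1) (by omega) (by omega) |>.trans_eq
            (by rw [Nat.sub_add_cancel (by omega)]))
          intro k hk1 hk2
          rcases eq_or_lt_of_le hk1 with he2 | hlt2
          · rw [← he2]
          · have h1 : f i ≤ f k :=
              chain_gen (· ≤ ·) (fun _ _ _ a b => a.trans b) f i k
                (fun j hj1 hj2 => hup j hj1 (by omega)) hlt2
            rcases eq_or_lt_of_le hk2 with he3 | hlt3
            · rw [he3]; omega
            · have h2 : f k ≤ f i' :=
                chain_gen (· ≤ ·) (fun _ _ _ a b => a.trans b) f k i'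
                  (fun j hj1 hj2 => hup j (by omega) hj2) hlt3
              omega
        · -- strictly decreasing run : contradiction
          exfalso
          have hdown : ∀ k, i ≤ k → k < i' → f (k + 1) < f k := by
            intro k hk1 hk2
            rcases eq_or_lt_of_le hk1 with he2 | hlt2
            · rw [← he2]; omega
            · have hiffk : f i ≤ f (i + 1) ↔ f k ≤ f (k + 1) := by
                rcases Nat.lt_or_ge (i + 1) k with hh | hh
                · have := chain_gen (fun p q => p = q) (fun _ _ _ a b => a.trans b)
                    (fun j => if f j ≤ f (j + 1) then 1 else 0) i k ?_ hlt2
                  · exact myIteIff _ _ this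
                  · intro j hj1 hj2
                    have := hstep j hj1 (by omega)
                    split_ifs with b1 b2 b2 <;> first | rfl | (exfalso; omega)
                · have : k = i + 1 := by omega
                  subst this
                  exact hstep i le_rfl (by omega)
              have := mt hiffk.mpr hc
              omega
          have h1 : f i' < f i :=
            chain_gen (fun p q => q < p) (fun _ _ _ a b => b.trans a) f i i' hdown hlt
          have h2 : f (i' - 1) > f i' := by
            have := hdown (i' - 1) (by omega) (by omega)
            rwa [Nat.sub_add_cancel (by omega)] at this
          have h3 := mt hbound.mp (by omega)
          omega
      intro k
      rcases lt_trichotomy k i with hk | hk | hk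
      · exact hlo k hk
      · subst hk
        rw [hmid k le_rfl hlt, hconst (k + 1) (by omega) (by omega)]
      · rcases lt_trichotomy k i' with hk2 | hk2 | hk2
        · rw [hmid k (by omega) hk2, hconst (k + 1) (by omega) (by omega),
            ← hconst k (by omega) (by omega)]
        · subst hk2
          have hval' : g k = f i := hval.symm
          rw [hval', hconst k (by omega) le_rfl]
        · exact hhi k hk2
  exact (list_eq_of_getD x' x (by omega) hent).symm

theorem stmt_3 (q n a b : ℕ) (hq : 2 ≤ q) (hn : 2 ≤ n) (ha : a < n) (hb : b < q)
    (x x' : List ℕ)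
    (hxlen : x.length = n) (hxq : ∀ c ∈ x, c < q)
    (hxsig : synL (sigL x) % n = a) (hxsum : x.sum % q = b)
    (hx'len : x'.length = n) (hx'q : ∀ c ∈ x', c < q)
    (hx'sig : synL (sigL x') % n = a) (hx'sum : x'.sum % q = b)
    (hne : x ≠ x') :
    ¬ ∃ z : List ℕ, (∃ i < n, z = x.eraseIdx i) ∧ (∃ i < n, z = x'.eraseIdx i) := by
  rintro ⟨z, ⟨i, hi, hzx⟩, ⟨i', hi', hzx'⟩⟩
  apply hne
  have hez : x.eraseIdx i = x'.eraseIdx i' := by rw [← hzx, ← hzx']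
  -- deleted values are equal
  have hu : x.getD i 0 < q := by
    rw [List.getD_eq_getElem _ 0 (by omega)]
    exact hxq _ (List.getElem_mem _)
  have hv : x'.getD i' 0 < q := by
    rw [List.getD_eq_getElem _ 0 (by omega)]
    exact hx'q _ (List.getElem_mem _)
  have hsum1 := sum_eraseIdx x i (by omega)
  have hsum2 := sum_eraseIdx x' i' (by omega)
  have hval : x.getD i 0 = x'.getD i' 0 := by
    have hm : (z.sum + x.getD i 0) % q = (z.sum + x'.getD i' 0) % q := by
      rw [← hzx] at hsum1; rw [← hzx'] at hsum2
      rw [← hsum1, ← hsum2, hxsum, hx'sum]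
    have := Nat.ModEq.add_left_cancel' z.sum hm
    rwa [Nat.ModEq, Nat.mod_eq_of_lt hu, Nat.mod_eq_of_lt hv] at this
  -- signatures are equal
  have hsig : sigL x = sigL x' := by
    obtain ⟨j, hj, hjz⟩ := sigL_eraseIdx x i (by omega) (by omega)
    obtain ⟨j', hj', hjz'⟩ := sigL_eraseIdx x' i' (by omega) (by omega)
    have hcommon : (sigL x).eraseIdx j = (sigL x').eraseIdx j' := by
      rw [← hjz, ← hjz', hez]
    have hm1 : (n - 1) + 1 = n := by omega
    have hsynmod : synL (sigL x) % (n - 1 + 1) = synL (sigL x') % (n - 1 + 1) := by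
      rw [hm1, hxsig, hx'sig]
    rcases le_total j j' with hjj | hjj
    · exact vt_binary_aux (n - 1) (sigL x) (sigL x')
        (by rw [length_sigL, hxlen]) (by rw [length_sigL, hx'len])
        (sigL_binary x) (sigL_binary x') hsynmod j j'
        (by rw [hxlen] at hj; omega) (by rw [hx'len] at hj'; omega) hjj hcommon
    · exact (vt_binary_aux (n - 1) (sigL x') (sigL x)
        (by rw [length_sigL, hx'len]) (by rw [length_sigL, hxlen])
        (sigL_binary x') (sigL_binary x) hsynmod.symm j' j
        (by rw [hx'len] at hj'; omega) (by rw [hxlen] at hj; omega) hjj hcommon.symm).symm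
  rcases le_total i i' with hii | hii
  · exact sig_eq_aux n x x' hxlen hx'len hsig i i' hi hi' hii hval hez
  · exact (sig_eq_aux n x' x hx'len hxlen hsig.symm i' i hi' hi hii hval.symm hez.symm).symm
end

section
/- Let q ≥ 2, n ≥ 1, a ∈ ℤ_{qn}, and let VT*_a(n;q) = {x ∈ Σ_q^n : Syn(Diff(x)) ≡ a (mod qn)}. If x ∈ VT*_a(n;q) and x' ∈ Σ_q^{n-1} is obtained from x by deleting coordinate x_i, then the value of the deleted symbol is determined by x': x_i ≡ a - Σ_{j=1}^{n-1} x'_j (mod q). -/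
/-- Differential vector: `Diff(x)_i = x_i - x_{i+1} (mod q)` for `i < n`, `Diff(x)_n = x_n`. -/
def diffL (q : ℕ) (x : List ℕ) : List ℕ :=
  List.ofFn fun i : Fin x.length =>
    if i.1 + 1 < x.length then
      (((x.getD i.1 0 : ℤ) - (x.getD (i.1 + 1) 0 : ℤ)) % (q : ℤ)).toNat
    else x.getD i.1 0

lemma sum_getD (l : List ℕ) : l.sum = ∑ i ∈ Finset.range l.length, l.getD i 0 := by
  induction l with
  | nil => simp
  | cons a l ih =>
    rw [List.length_cons, Finset.sum_range_succ']
    simp [ih, Nat.add_comm]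

lemma erase_sum (l : List ℕ) (i : ℕ) (h : i < l.length) :
    l.getD i 0 + (l.eraseIdx i).sum = l.sum := by
  induction l generalizing i with
  | nil => simp at h
  | cons a l ih =>
    cases i with
    | zero => simp
    | succ j =>
      simp only [List.getD_cons_succ, List.eraseIdx_cons_succ, List.sum_cons]
      have := ih j (by simpa using h)
      omega

lemma tele {R : Type*} [CommRing R] (f : ℕ → R) (n : ℕ) :
    ∑ i ∈ Finset.range n, ((i : R) + 1) * (f i - f (i + 1)) =
      (∑ i ∈ Finset.range n, f i) - (n : R) * f n := by
  induction n with
  | zero => simp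
  | succ n ih =>
    rw [Finset.sum_range_succ, ih, Finset.sum_range_succ]
    push_cast
    ring

lemma syn_diff_mod (q : ℕ) (hq : 0 < q) (x : List ℕ) :
    ((synL (diffL q x) : ZMod q) : ZMod q) = (x.sum : ZMod q) := by
  set m := x.length with hm
  have hlen : (diffL q x).length = m := by simp [diffL, hm]
  set f : ℕ → ZMod q := fun j => (x.getD j 0 : ZMod q) with hf
  have hfm : f m = 0 := by
    show ((x.getD m 0 : ℕ) : ZMod q) = 0
    rw [List.getD_eq_default _ _ (le_refl m)]
    simp
  have hD : ∀ i ∈ Finset.range m, (((diffL q x).getD i 0 : ℕ) : ZMod q)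
      = f i - f (i + 1) := by
    intro i hi
    rw [Finset.mem_range] at hi
    have hgd : (diffL q x).getD i 0 = (diffL q x)[i]'(by omega) :=
      List.getD_eq_getElem _ _ (by omega)
    rw [hgd]
    simp only [diffL, List.getElem_ofFn]
    by_cases h1 : i + 1 < m
    · rw [if_pos (show i + 1 < x.length from h1)]
      have hnn : (0:ℤ) ≤ ((x.getD i 0 : ℤ) - (x.getD (i+1) 0 : ℤ)) % (q : ℤ) :=
        Int.emod_nonneg _ (by exact_mod_cast hq.ne')
      rw [show ((Int.toNat (((x.getD i 0 : ℤ) - (x.getD (i+1) 0 : ℤ)) % (q : ℤ)) : ℕ) : ZMod q)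
          = (((Int.toNat (((x.getD i 0 : ℤ) - (x.getD (i+1) 0 : ℤ)) % (q : ℤ)) : ℤ)) : ZMod q)
          from (Int.cast_natCast _).symm, Int.toNat_of_nonneg hnn, ZMod.intCast_mod]
      push_cast
      ring
    · rw [if_neg (show ¬ i + 1 < x.length from h1)]
      have hz : f (i + 1) = 0 := by
        show ((x.getD (i+1) 0 : ℕ) : ZMod q) = 0
        rw [List.getD_eq_default _ _ (by omega : m ≤ i + 1)]
        simp
      rw [hz, sub_zero]
  calc ((synL (diffL q x) : ℕ) : ZMod q)
      = ∑ i ∈ Finset.range m, ((i : ZMod q) + 1) * (((diffL q x).getD i 0 : ℕ) : ZMod q) := by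
        rw [synL, hlen]
        push_cast
        ring
    _ = ∑ i ∈ Finset.range m, ((i : ZMod q) + 1) * (f i - f (i + 1)) := by
        exact Finset.sum_congr rfl fun i hi => by rw [hD i hi]
    _ = (∑ i ∈ Finset.range m, f i) - (m : ZMod q) * f m := tele f m
    _ = (x.sum : ZMod q) := by
        rw [hfm, mul_zero, sub_zero, sum_getD]
        push_cast [hm]
        rfl

/-- The deleted symbol satisfies `x_i ≡ a - ∑_j x'_j (mod q)`, equivalently
`x_i + ∑_j x'_j ≡ a (mod q)`.  (Coordinates are 0-indexed here.) -/
theorem stmt_9 (q n a i : ℕ) (hq : 2 ≤ q) (hn : 1 ≤ n) (ha : a < q * n)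
    (x : List ℕ) (hlen : x.length = n) (hx : ∀ b ∈ x, b < q)
    (hcode : synL (diffL q x) % (q * n) = a)
    (hi : i < n) (x' : List ℕ) (hdel : x' = x.eraseIdx i) :
    (x.getD i 0 + x'.sum) % q = a % q := by
  subst hdel
  have h1 : x.getD i 0 + (x.eraseIdx i).sum = x.sum := erase_sum x i (by omega)
  rw [h1]
  have h2 : a % q = synL (diffL q x) % q := by
    rw [← hcode, Nat.mod_mod_of_dvd _ ⟨n, rfl⟩]
  rw [h2, ← ZMod.natCast_eq_natCast_iff']
  exact (syn_diff_mod q (by omega) x).symm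
end
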